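/- arXiv:0711.0765 — 5 statements merged into one kernel-verified Lean document; each statement's English description precedes it below -/
import Mathlib

section
/- Let p be a prime and a an integer with 0 < a < p. Then s(a,p) = (1/(12ap))(p-1)(2pa² - a² - 3ap + 2p - 1) - (1/(2a))·Σ_{i=1}^{p-1} [a·i/p]². -/
open Finset

lemma aux_Icc_range (n : ℕ) (f : ℤ → ℚ) :
    ∑ i ∈ Finset.Icc (1:ℤ) (n:ℤ), f i = ∑ i ∈ Finset.range n, f ((i:ℤ)+1) := by
  refine Finset.sum_nbij' (fun i => (i - 1).toNat) (fun k => (k:ℤ)+1) ?_ ?_ ?_ ?_ ?_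
  · intro i hi; simp only [Finset.mem_Icc] at hi; simp only [Finset.mem_range]; omega
  · intro k hk; simp only [Finset.mem_range] at hk; simp only [Finset.mem_Icc]; omega
  · intro i hi; simp only [Finset.mem_Icc] at hi; omega
  · intro k hk; simp only [Finset.mem_range] at hk; omega
  · intro i hi; simp only [Finset.mem_Icc] at hi
    congr 1; omega

lemma aux_sum1 (n : ℕ) : ∑ i ∈ Finset.range n, ((i:ℚ)+1) = (n:ℚ)*(n+1)/2 := by
  induction n with
  | zero => simp
  | succ m ih => rw [Finset.sum_range_succ, ih]; push_cast; ring

lemma aux_sum2 (n : ℕ) : ∑ i ∈ Finset.range n, ((i:ℚ)+1)^2 = (n:ℚ)*(n+1)*(2*n+1)/6 := by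
  induction n with
  | zero => simp
  | succ m ih => rw [Finset.sum_range_succ, ih]; push_cast; ring

/-- The sawtooth function `((x)) = x - ⌊x⌋ - 1/2` for non-integer `x`, and `0` for integer `x`. -/
def saw (x : ℚ) : ℚ := if x.den = 1 then 0 else x - ⌊x⌋ - 1/2

/-- The Dedekind sum `s(q,p) = Σ_{i=1}^{p-1} ((i/p))((iq/p))`. -/
noncomputable def dedekindSum (q p : ℤ) : ℚ :=
  ∑ i ∈ Finset.Icc (1 : ℤ) (p - 1), saw ((i : ℚ) / p) * saw ((i * q : ℚ) / p)

theorem stmt6 (p : ℕ) (hp : p.Prime) (a : ℤ) (ha0 : 0 < a) (hap : a < p) :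
    dedekindSum a p =
      (1 / (12 * (a : ℚ) * p)) * ((p : ℚ) - 1) *
          (2 * p * a ^ 2 - a ^ 2 - 3 * a * p + 2 * p - 1) -
        (1 / (2 * (a : ℚ))) *
          ∑ i ∈ Finset.Icc (1 : ℤ) ((p : ℤ) - 1), (⌊(a * i : ℚ) / p⌋ : ℚ) ^ 2 := by
  have hp1 : 1 < (p:ℤ) := by exact_mod_cast hp.one_lt
  have hpP : Prime (p:ℤ) := Nat.prime_iff_prime_int.mp hp
  have hppos : (0:ℤ) < (p:ℤ) := by omega
  have hpQ : ((p:ℤ):ℚ) ≠ 0 := by positivity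
  have hpQ' : ((p:ℕ):ℚ) ≠ 0 := by positivity
  have haQ : ((a:ℤ):ℚ) ≠ 0 := by positivity
  have hpa : ¬ ((p:ℤ) ∣ a) := by
    intro h; have := Int.le_of_dvd ha0 h; omega
  set s : Finset ℤ := Finset.Icc (1:ℤ) ((p:ℤ)-1) with hs
  have hmem : ∀ i ∈ s, 1 ≤ i ∧ i ≤ (p:ℤ) - 1 := by
    intro i hi; simpa [hs, Finset.mem_Icc] using hi
  have hnd : ∀ i ∈ s, ¬ ((p:ℤ) ∣ a * i) := by
    intro i hi h
    obtain hi' := hmem i hi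
    rcases hpP.dvd_mul.mp h with h1 | h1
    · exact hpa h1
    · have := Int.le_of_dvd (by omega) h1; omega
  -- r i = (a*i) % p
  set r : ℤ → ℤ := fun i => (a * i) % (p:ℤ) with hr
  have hrmem : ∀ i ∈ s, r i ∈ s := by
    intro i hi
    have h0 : 0 ≤ r i := Int.emod_nonneg _ (by omega)
    have h1 : r i < (p:ℤ) := Int.emod_lt_of_pos _ hppos
    have h2 : r i ≠ 0 := by
      intro h; exact hnd i hi (Int.dvd_of_emod_eq_zero h)
    simp only [hs, Finset.mem_Icc]; omega
  -- floor = (a*i - r i)/p  as rationals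
  have hfract : ∀ i : ℤ, ((⌊((a:ℚ) * i) / (p:ℕ)⌋ : ℤ) : ℚ) = ((a:ℚ) * i - (r i : ℚ)) / p := by
    intro i
    have h := Int.fract_div_intCast_eq_div_intCast_mod (k := ℚ) (m := a * i) (n := p)
    rw [Int.fract] at h
    push_cast at h ⊢
    rw [eq_div_iff hpQ']
    rw [sub_eq_iff_eq_add] at h
    field_simp at h ⊢
    linarith [h]
  -- Bezout coefficient
  have hcop : IsCoprime ((p:ℤ)) a := hpP.coprime_iff_not_dvd.mpr hpa
  obtain ⟨x, u, hxy⟩ := hcop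
  have hmm : ∀ w z : ℤ, (w * (z % (p:ℤ))) % (p:ℤ) = (w * z) % (p:ℤ) := by
    intro w z
    conv_lhs => rw [Int.mul_emod, Int.emod_emod_of_dvd _ dvd_rfl, ← Int.mul_emod]
  have hpsiphi : ∀ i ∈ s, (u * (r i)) % (p:ℤ) = i := by
    intro i hi
    obtain hi' := hmem i hi
    rw [hr]; dsimp only
    rw [hmm]
    rw [show u * (a * i) = i + (p:ℤ) * (-(x*i)) by linear_combination i * hxy]
    rw [Int.add_mul_emod_self_left]
    exact Int.emod_eq_of_lt (by omega) (by omega)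
  have hphipsi : ∀ j ∈ s, (a * ((u * j) % (p:ℤ))) % (p:ℤ) = j := by
    intro j hj
    obtain hj' := hmem j hj
    rw [hmm]
    rw [show a * (u * j) = j + (p:ℤ) * (-(x*j)) by linear_combination j * hxy]
    rw [Int.add_mul_emod_self_left]
    exact Int.emod_eq_of_lt (by omega) (by omega)
  have hpsimem : ∀ j ∈ s, (u * j) % (p:ℤ) ∈ s := by
    intro j hj
    obtain hj' := hmem j hj
    have h0 : 0 ≤ (u * j) % (p:ℤ) := Int.emod_nonneg _ (by omega)
    have h1 : (u * j) % (p:ℤ) < (p:ℤ) := Int.emod_lt_of_pos _ hppos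
    have h2 : (u * j) % (p:ℤ) ≠ 0 := by
      intro h
      have := hphipsi j hj
      rw [h, mul_zero, Int.zero_emod] at this
      omega
    simp only [hs, Finset.mem_Icc]; omega
  have hperm : ∀ g : ℤ → ℚ, (∑ i ∈ s, g (r i)) = ∑ j ∈ s, g j := by
    intro g
    exact Finset.sum_nbij' (fun i => r i) (fun j => (u * j) % (p:ℤ)) hrmem hpsimem
      hpsiphi hphipsi (fun i _ => rfl)
  -- saw values
  have hden : ∀ m : ℤ, ¬ ((p:ℤ) ∣ m) → ((m:ℚ) / ((p:ℤ):ℚ)).den ≠ 1 := by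
    intro m hm h
    exact hm ((Rat.den_div_intCast_eq_one_iff m (p:ℤ) (by omega)).mp h)
  have hsaw1 : ∀ i ∈ s, saw ((i:ℚ) / ((p:ℤ):ℚ)) = (i:ℚ)/((p:ℕ):ℚ) - 1/2 := by
    intro i hi
    obtain hi' := hmem i hi
    have hdvd : ¬ ((p:ℤ) ∣ i) := by
      intro h; have := Int.le_of_dvd (by omega) h; omega
    rw [saw, if_neg (hden i hdvd)]
    have hfl : ⌊(i:ℚ) / ((p:ℤ):ℚ)⌋ = 0 := by
      rw [Int.floor_eq_zero_iff, Set.mem_Ico]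
      constructor
      · apply div_nonneg
        · exact_mod_cast (by omega : (0:ℤ) ≤ i)
        · exact_mod_cast hppos.le
      · rw [div_lt_one (by exact_mod_cast hppos)]
        exact_mod_cast (by omega : i < (p:ℤ))
    rw [hfl]
    push_cast
    ring
  have hsaw2 : ∀ i ∈ s, saw (((i:ℚ) * (a:ℚ)) / ((p:ℤ):ℚ)) = (r i : ℚ)/((p:ℕ):ℚ) - 1/2 := by
    intro i hi
    have hdvd : ¬ ((p:ℤ) ∣ i * a) := by
      rw [mul_comm]; exact hnd i hi
    have harg : ((i:ℚ) * (a:ℚ)) / ((p:ℤ):ℚ) = (((i*a : ℤ):ℚ)) / ((p:ℤ):ℚ) := by push_cast; ring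
    rw [harg, saw, if_neg (hden _ hdvd)]
    have h2 := hfract i
    have hfl : ⌊((i*a : ℤ):ℚ) / ((p:ℤ):ℚ)⌋ = ⌊((a:ℚ) * i) / ((p:ℕ):ℚ)⌋ := by
      congr 1; push_cast; ring
    rw [hfl]
    rw [show (((i*a : ℤ):ℚ)) / ((p:ℤ):ℚ) = ((a:ℚ) * i)/((p:ℕ):ℚ) by push_cast; ring]
    rw [h2]
    field_simp
    ring
  have step1 : dedekindSum a (p:ℤ) = ∑ i ∈ s, ((i:ℚ)/((p:ℕ):ℚ) - 1/2) * ((r i:ℚ)/((p:ℕ):ℚ) - 1/2) := by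
    rw [dedekindSum, ← hs]
    exact Finset.sum_congr rfl fun i hi => by rw [hsaw1 i hi, hsaw2 i hi]
  have hcardZ : (s.card : ℤ) = (p:ℤ) - 1 := by rw [hs, Int.card_Icc]; omega
  have hcard : (s.card : ℚ) = ((p:ℕ):ℚ) - 1 := by exact_mod_cast hcardZ
  have hS1 : ∑ i ∈ s, (i:ℚ) = ((p:ℕ):ℚ)*(((p:ℕ):ℚ)-1)/2 := by
    rw [hs, show ((p:ℤ)-1) = (((p-1:ℕ)):ℤ) by omega, aux_Icc_range (p-1) (fun i => (i:ℚ))]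
    rw [Finset.sum_congr rfl (fun (i : ℕ) _ => show (((i:ℤ)+1 : ℤ):ℚ) = (i:ℚ)+1 by push_cast; ring)]
    rw [aux_sum1 (p-1)]
    have h1 : ((p-1:ℕ):ℚ) = ((p:ℕ):ℚ) - 1 := by
      push_cast [Nat.cast_sub hp.one_le]; ring
    rw [h1]; ring
  have hS2 : ∑ i ∈ s, (i:ℚ)^2 = ((p:ℕ):ℚ)*(((p:ℕ):ℚ)-1)*(2*((p:ℕ):ℚ)-1)/6 := by
    rw [hs, show ((p:ℤ)-1) = (((p-1:ℕ)):ℤ) by omega, aux_Icc_range (p-1) (fun i => (i:ℚ)^2)]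
    rw [Finset.sum_congr rfl (fun (i : ℕ) _ => show (((i:ℤ)+1 : ℤ):ℚ)^2 = ((i:ℚ)+1)^2 by push_cast; ring)]
    rw [aux_sum2 (p-1)]
    have h1 : ((p-1:ℕ):ℚ) = ((p:ℕ):ℚ) - 1 := by
      push_cast [Nat.cast_sub hp.one_le]; ring
    rw [h1]; ring
  have hR : ∑ i ∈ s, (r i : ℚ) = ∑ i ∈ s, (i:ℚ) := hperm (fun j => (j:ℚ))
  have hR2 : ∑ i ∈ s, (r i : ℚ)^2 = ∑ i ∈ s, (i:ℚ)^2 := hperm (fun j => (j:ℚ)^2)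
  have e1 : ∑ i ∈ s, ((i:ℚ)/((p:ℕ):ℚ) - 1/2) * ((r i:ℚ)/((p:ℕ):ℚ) - 1/2)
      = (1/((p:ℕ):ℚ)^2) * (∑ i ∈ s, (i:ℚ)*(r i:ℚ))
        - (1/(2*((p:ℕ):ℚ))) * (∑ i ∈ s, (i:ℚ))
        - (1/(2*((p:ℕ):ℚ))) * (∑ i ∈ s, (r i:ℚ)) + (s.card:ℚ) * (1/4) := by
    rw [Finset.sum_congr rfl (fun (i:ℤ) _ => show ((i:ℚ)/((p:ℕ):ℚ) - 1/2) * ((r i:ℚ)/((p:ℕ):ℚ) - 1/2)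
        = (1/((p:ℕ):ℚ)^2) * ((i:ℚ)*(r i:ℚ)) - (1/(2*((p:ℕ):ℚ))) * (i:ℚ)
          - (1/(2*((p:ℕ):ℚ))) * (r i:ℚ) + 1/4 from by field_simp; ring)]
    rw [Finset.sum_add_distrib, Finset.sum_sub_distrib, Finset.sum_sub_distrib,
      ← Finset.mul_sum, ← Finset.mul_sum, ← Finset.mul_sum, Finset.sum_const, nsmul_eq_mul]
  have e2 : ∑ i ∈ s, (⌊((a:ℚ) * (i:ℚ)) / ((p:ℕ):ℚ)⌋ : ℚ)^2
      = ((a:ℚ)^2/((p:ℕ):ℚ)^2) * (∑ i ∈ s, (i:ℚ)^2)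
        - (2*(a:ℚ)/((p:ℕ):ℚ)^2) * (∑ i ∈ s, (i:ℚ)*(r i:ℚ))
        + (1/((p:ℕ):ℚ)^2) * (∑ i ∈ s, (i:ℚ)^2) := by
    rw [Finset.sum_congr rfl (fun (i:ℤ) _ => show (⌊((a:ℚ) * (i:ℚ)) / ((p:ℕ):ℚ)⌋ : ℚ)^2
        = ((a:ℚ)^2/((p:ℕ):ℚ)^2) * (i:ℚ)^2 - (2*(a:ℚ)/((p:ℕ):ℚ)^2)*((i:ℚ)*(r i:ℚ))
          + (1/((p:ℕ):ℚ)^2)*((r i:ℚ)^2) from by rw [hfract i]; field_simp; ring)]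
    rw [Finset.sum_add_distrib, Finset.sum_sub_distrib,
      ← Finset.mul_sum, ← Finset.mul_sum, ← Finset.mul_sum, hR2]
  rw [step1, e1, e2, hR, hS1, hS2, hcard]
  field_simp
  ring
end

section
/- Let p be a prime and a, b integers with 0 < a, b < p. Let a' denote the inverse of a modulo p with 0 < a' < p. Then Σ_{i=1}^{p-1} [a·i/p]·[b·i/p] = s(a'b, p) - a·s(b,p) - b·s(a,p) + (p-1)/(12p)·(3p - 3pa - 3pb + 2ab(2p-1)), where a'b is taken modulo p in {1,...,p-1}. -/
lemma den_one_iff_int (x : ℚ) : x.den = 1 ↔ ∃ z : ℤ, x = (z:ℚ) := by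
  constructor
  · intro h
    exact ⟨x.num, ((Rat.den_eq_one_iff x).mp h).symm⟩
  · rintro ⟨z, rfl⟩
    exact Rat.den_intCast z

lemma saw_add_int (x : ℚ) (k : ℤ) : saw (x + k) = saw x := by
  have h1 : (x + (k:ℚ)).den = 1 ↔ x.den = 1 := by
    rw [den_one_iff_int, den_one_iff_int]
    constructor
    · rintro ⟨z, hz⟩
      exact ⟨z - k, by push_cast; linarith⟩
    · rintro ⟨z, rfl⟩
      exact ⟨z + k, by push_cast; ring⟩
  unfold saw
  rw [Int.floor_add_intCast]
  by_cases hx : x.den = 1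
  · rw [if_pos (h1.mpr hx), if_pos hx]
  · rw [if_neg (fun h => hx (h1.mp h)), if_neg hx]
    push_cast
    ring

lemma den_ne_one {m : ℤ} {p : ℤ} (hp : 0 < p) (h : ¬ p ∣ m) : ((m:ℚ)/p).den ≠ 1 := by
  rw [Ne, Rat.den_div_intCast_eq_one_iff m p hp.ne']
  exact h

lemma saw_eval {m : ℤ} {p : ℤ} (hp : 0 < p) (h : ¬ p ∣ m) :
    saw ((m:ℚ)/p) = (m:ℚ)/p - ⌊(m:ℚ)/p⌋ - 1/2 := by
  unfold saw
  rw [if_neg (den_ne_one hp h)]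

lemma saw_mod (m : ℤ) (p : ℤ) (hp : 0 < p) :
    saw (((m % p : ℤ) : ℚ)/p) = saw ((m:ℚ)/p) := by
  have hP : (p:ℚ) ≠ 0 := Int.cast_ne_zero.mpr hp.ne'
  have key : (m:ℚ)/p = ((m % p : ℤ) : ℚ)/p + ((m / p : ℤ) : ℚ) := by
    rw [div_add' _ _ _ hP, div_eq_div_iff hP hP]
    have h2 : ((m % p : ℤ):ℚ) + ((m/p:ℤ):ℚ) * p = m := by
      exact_mod_cast congrArg (fun z : ℤ => (z:ℚ)) (Int.emod_add_ediv_mul m p)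
    rw [h2]
  rw [key, saw_add_int]

lemma saw_congr {m n : ℤ} (p : ℤ) (hp : 0 < p) (h : m % p = n % p) :
    saw ((m:ℚ)/p) = saw ((n:ℚ)/p) := by
  rw [← saw_mod m p hp, h, saw_mod n p hp]

lemma exists_inv (p : ℕ) (hp : p.Prime) {c : ℤ} (hc : ¬ (p:ℤ) ∣ c) :
    ∃ c' : ℤ, (c * c') % (p:ℤ) = 1 % (p:ℤ) := by
  have h1 : IsCoprime (c:ℤ) (p:ℤ) := by
    rw [Int.isCoprime_iff_gcd_eq_one]
    have h2 : ¬ p ∣ c.natAbs := by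
      intro h
      exact hc (Int.natCast_dvd.mpr h)
    have h3 := (Nat.Prime.coprime_iff_not_dvd hp).mpr h2
    simpa [Int.gcd, Nat.coprime_comm] using h3
  obtain ⟨u, v, huv⟩ := h1
  refine ⟨u, ?_⟩
  have h4 : c * u + (p:ℤ) * v = 1 := by linarith
  conv_rhs => rw [← h4]
  rw [Int.add_mul_emod_self_left]

lemma emod_inv_mul (p c c' : ℤ) (hp : 0 < p) (hcc' : (c * c') % p = 1 % p) (i : ℤ) :
    (c * (c' * i)) % p = i % p := by
  have h1 : c * (c' * i) = (c * c') * i := by ring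
  rw [h1, Int.mul_emod, hcc', ← Int.mul_emod, one_mul]

lemma sum_perm (p : ℕ) (hp : p.Prime) (c c' : ℤ)
    (hcc' : (c * c') % (p:ℤ) = 1 % (p:ℤ)) (F : ℤ → ℚ)
    (hF : ∀ m n : ℤ, m % (p:ℤ) = n % (p:ℤ) → F m = F n) :
    ∑ i ∈ Finset.Icc (1:ℤ) ((p:ℤ)-1), F (c * i)
      = ∑ i ∈ Finset.Icc (1:ℤ) ((p:ℤ)-1), F i := by
  have hq2 : 2 ≤ (p:ℤ) := by exact_mod_cast hp.two_le
  have hq0 : (0:ℤ) < (p:ℤ) := by omega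
  have h1p : (1:ℤ) % (p:ℤ) = 1 := Int.emod_eq_of_lt (by omega) (by omega)
  have hqprime : Prime ((p:ℤ)) := Int.prime_iff_natAbs_prime.mpr (by simpa using hp)
  have hpc : ¬ (p:ℤ) ∣ c := by
    intro h
    have : (c * c') % (p:ℤ) = 0 := Int.emod_eq_zero_of_dvd (h.mul_right c')
    omega
  have hpc' : ¬ (p:ℤ) ∣ c' := by
    intro h
    have : (c * c') % (p:ℤ) = 0 := Int.emod_eq_zero_of_dvd (h.mul_left c)
    omega
  have hcc'2 : (c' * c) % (p:ℤ) = 1 % (p:ℤ) := by rw [mul_comm]; exact hcc'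
  have hmem : ∀ d : ℤ, ¬ (p:ℤ) ∣ d → ∀ i ∈ Finset.Icc (1:ℤ) ((p:ℤ)-1),
      d * i % (p:ℤ) ∈ Finset.Icc (1:ℤ) ((p:ℤ)-1) := by
    intro d hd i hi
    rw [Finset.mem_Icc] at hi ⊢
    have h0 : 0 ≤ d * i % (p:ℤ) := Int.emod_nonneg _ (by omega)
    have h1 : d * i % (p:ℤ) < (p:ℤ) := Int.emod_lt_of_pos _ hq0
    have hne : d * i % (p:ℤ) ≠ 0 := by
      intro h
      have hdvd : (p:ℤ) ∣ d * i := Int.dvd_of_emod_eq_zero h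
      rcases hqprime.dvd_mul.mp hdvd with h' | h'
      · exact hd h'
      · have := Int.le_of_dvd (by omega) h'
        omega
    omega
  have hid : ∀ i ∈ Finset.Icc (1:ℤ) ((p:ℤ)-1), i % (p:ℤ) = i := by
    intro i hi
    rw [Finset.mem_Icc] at hi
    exact Int.emod_eq_of_lt (by omega) (by omega)
  refine Finset.sum_nbij' (fun i => c * i % (p:ℤ)) (fun i => c' * i % (p:ℤ))
    (hmem c hpc) (hmem c' hpc') ?_ ?_ ?_
  · intro i hi
    show c' * (c * i % (p:ℤ)) % (p:ℤ) = i
    rw [Int.mul_emod, Int.emod_emod_of_dvd _ dvd_rfl, ← Int.mul_emod,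
      emod_inv_mul _ c' c hq0 hcc'2, hid i hi]
  · intro i hi
    show c * (c' * i % (p:ℤ)) % (p:ℤ) = i
    rw [Int.mul_emod, Int.emod_emod_of_dvd _ dvd_rfl, ← Int.mul_emod,
      emod_inv_mul _ c c' hq0 hcc', hid i hi]
  · intro i hi
    apply hF
    show c * i % (p:ℤ) = (c * i % (p:ℤ)) % (p:ℤ)
    rw [Int.emod_emod_of_dvd _ dvd_rfl]

lemma sum_Icc_int (f : ℤ → ℚ) (n : ℕ) :
    ∑ i ∈ Finset.Icc (1:ℤ) (n:ℤ), f i = ∑ j ∈ Finset.range n, f ((j:ℤ)+1) := by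
  have h : Finset.Icc (1:ℤ) (n:ℤ)
      = Finset.map ⟨fun j : ℕ => (j:ℤ)+1, fun x y h => by exact_mod_cast add_right_cancel h⟩ (Finset.range n) := by
    ext x
    simp only [Finset.mem_Icc, Finset.mem_map, Finset.mem_range, Function.Embedding.coeFn_mk]
    show (1 ≤ x ∧ x ≤ (n:ℤ)) ↔ ∃ a, a < n ∧ (a:ℤ) + 1 = x
    constructor
    · intro ⟨h1, h2⟩
      exact ⟨(x-1).toNat, by omega, by omega⟩
    · rintro ⟨j, hj, rfl⟩
      omega
  rw [h, Finset.sum_map]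
  rfl

lemma gauss1 (n : ℕ) : ∑ j ∈ Finset.range n, (((j:ℤ)+1 : ℤ):ℚ) = n*(n+1)/2 := by
  induction n with
  | zero => simp
  | succ k ih => rw [Finset.sum_range_succ, ih]; push_cast; ring

lemma gauss2 (n : ℕ) : ∑ j ∈ Finset.range n, (((j:ℤ)+1 : ℤ):ℚ)^2 = n*(n+1)*(2*n+1)/6 := by
  induction n with
  | zero => simp
  | succ k ih => rw [Finset.sum_range_succ, ih]; push_cast; ring

lemma cast_pred (p : ℕ) (hp : 1 ≤ p) : ((p - 1 : ℕ) : ℤ) = (p:ℤ) - 1 := by omega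

lemma sum_cast_Icc (p : ℕ) (hp : 1 ≤ p) :
    ∑ i ∈ Finset.Icc (1:ℤ) ((p:ℤ)-1), (i:ℚ) = ((p:ℚ)-1)*p/2 := by
  rw [← cast_pred p hp, sum_Icc_int (fun i => (i:ℚ)) (p-1), gauss1]
  have h1 : ((p-1:ℕ):ℚ) = (p:ℚ) - 1 := by push_cast [Nat.cast_sub hp]; ring
  rw [h1]
  ring

lemma sum_sq_Icc (p : ℕ) (hp : 1 ≤ p) :
    ∑ i ∈ Finset.Icc (1:ℤ) ((p:ℤ)-1), (i:ℚ)^2 = ((p:ℚ)-1)*p*(2*p-1)/6 := by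
  rw [← cast_pred p hp, sum_Icc_int (fun i => (i:ℚ)^2) (p-1), gauss2]
  have h1 : ((p-1:ℕ):ℚ) = (p:ℚ) - 1 := by push_cast [Nat.cast_sub hp]; ring
  rw [h1]
  ring

lemma card_Icc_cast (p : ℕ) (hp : 1 ≤ p) :
    ((Finset.Icc (1:ℤ) ((p:ℤ)-1)).card : ℚ) = (p:ℚ) - 1 := by
  rw [Int.card_Icc]
  have : ((p:ℤ) - 1 + 1 - 1).toNat = p - 1 := by omega
  rw [this]
  push_cast [Nat.cast_sub hp]
  ring

lemma not_dvd_of_Icc (p : ℕ) {i : ℤ} (h1 : 1 ≤ i) (h2 : i ≤ (p:ℤ)-1) : ¬ (p:ℤ) ∣ i := by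
  intro h
  have := Int.le_of_dvd (by omega) h
  omega

lemma not_dvd_mul (p : ℕ) (hp : p.Prime) {c i : ℤ} (hc : ¬ (p:ℤ) ∣ c)
    (h1 : 1 ≤ i) (h2 : i ≤ (p:ℤ)-1) : ¬ (p:ℤ) ∣ c * i := by
  intro h
  rcases ((Int.prime_iff_natAbs_prime.mpr (by simpa using hp)).dvd_mul.mp h) with h' | h'
  · exact hc h'
  · exact not_dvd_of_Icc p h1 h2 h'

lemma saw_small (p : ℕ) (hp : p.Prime) {i : ℤ} (h1 : 1 ≤ i) (h2 : i ≤ (p:ℤ)-1) :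
    saw ((i:ℚ)/p) = (i:ℚ)/p - 1/2 := by
  have hq0 : (0:ℤ) < (p:ℤ) := by exact_mod_cast hp.pos
  have hs := saw_eval (p := (p:ℤ)) hq0 (not_dvd_of_Icc p h1 h2)
  push_cast at hs
  rw [hs]
  have hfl : ⌊(i:ℚ)/(p:ℤ)⌋ = 0 := by
    apply Int.floor_eq_zero_iff.mpr
    constructor
    · apply div_nonneg
      · exact_mod_cast by omega
      · exact_mod_cast by omega
    · rw [div_lt_one (by exact_mod_cast hp.pos)]
      exact_mod_cast by omega
  push_cast at hfl ⊢
  rw [hfl]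
  push_cast
  ring

lemma sum_saw_base (p : ℕ) (hp : p.Prime) :
    ∑ i ∈ Finset.Icc (1:ℤ) ((p:ℤ)-1), saw ((i:ℚ)/p) = 0 := by
  have hP : (p:ℚ) ≠ 0 := Nat.cast_ne_zero.mpr hp.pos.ne'
  have hcongr : ∑ i ∈ Finset.Icc (1:ℤ) ((p:ℤ)-1), saw ((i:ℚ)/p)
      = ∑ i ∈ Finset.Icc (1:ℤ) ((p:ℤ)-1), ((i:ℚ)/p - 1/2) := by
    apply Finset.sum_congr rfl
    intro i hi
    rw [Finset.mem_Icc] at hi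
    exact saw_small p hp hi.1 hi.2
  rw [hcongr, Finset.sum_sub_distrib, ← Finset.sum_div, sum_cast_Icc p hp.one_lt.le,
    Finset.sum_const, nsmul_eq_mul, card_Icc_cast p hp.one_lt.le]
  field_simp
  ring

lemma sum_saw_c (p : ℕ) (hp : p.Prime) {c : ℤ} (hc : ¬ (p:ℤ) ∣ c) :
    ∑ i ∈ Finset.Icc (1:ℤ) ((p:ℤ)-1), saw ((c*i : ℚ)/p) = 0 := by
  have hq0 : (0:ℤ) < (p:ℤ) := by exact_mod_cast hp.pos
  obtain ⟨c', hcc'⟩ := exists_inv p hp hc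
  have h := sum_perm p hp c c' hcc' (fun m => saw ((m:ℚ)/p))
    (fun m n hmn => by
      have := saw_congr (m := m) (n := n) (p:ℤ) hq0 hmn
      push_cast at this ⊢
      exact this)
  simp only [Int.cast_mul] at h
  rw [h, sum_saw_base p hp]

lemma sum_saw_mul_saw (p : ℕ) (b : ℤ) :
    ∑ i ∈ Finset.Icc (1:ℤ) ((p:ℤ)-1), saw ((i:ℚ)/p) * saw ((b*i : ℚ)/p)
      = dedekindSum b p := by
  unfold dedekindSum
  push_cast
  apply Finset.sum_congr rfl
  intro i _
  rw [mul_comm (b:ℚ) (i:ℚ)]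

lemma sum_saw_prod (p : ℕ) (hp : p.Prime) (a b a' : ℤ)
    (hinv : (a * a') % (p:ℤ) = 1 % (p:ℤ)) :
    ∑ i ∈ Finset.Icc (1:ℤ) ((p:ℤ)-1), saw ((a*i : ℚ)/p) * saw ((b*i : ℚ)/p)
      = dedekindSum (a'*b) p := by
  have hq0 : (0:ℤ) < (p:ℤ) := by exact_mod_cast hp.pos
  have h := sum_perm p hp a' a (by rw [mul_comm]; exact hinv)
    (fun m => saw ((a:ℚ)*(m:ℚ)/p) * saw ((b:ℚ)*(m:ℚ)/p))
    (fun m n hmn => by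
      have h1 : (a*m) % (p:ℤ) = (a*n) % (p:ℤ) := by
        rw [Int.mul_emod, hmn, ← Int.mul_emod]
      have h2 : (b*m) % (p:ℤ) = (b*n) % (p:ℤ) := by
        rw [Int.mul_emod, hmn, ← Int.mul_emod]
      have e1 := saw_congr (p := ((p:ℕ):ℤ)) hq0 h1
      have e2 := saw_congr (p := ((p:ℕ):ℤ)) hq0 h2
      push_cast at e1 e2 ⊢
      rw [e1, e2])
  rw [← h]
  unfold dedekindSum
  apply Finset.sum_congr rfl
  intro i hi
  have e := saw_congr (p := ((p:ℕ):ℤ)) hq0 (emod_inv_mul (p:ℤ) a a' hq0 hinv i)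
  push_cast at e ⊢
  rw [e]
  congr 2
  ring

lemma sum_i_saw (p : ℕ) (hp : p.Prime) {b : ℤ} (hpb : ¬ (p:ℤ) ∣ b) :
    ∑ i ∈ Finset.Icc (1:ℤ) ((p:ℤ)-1), (i:ℚ) * saw ((b*i:ℚ)/p)
      = (p:ℚ) * dedekindSum b p := by
  have hP : (p:ℚ) ≠ 0 := Nat.cast_ne_zero.mpr hp.pos.ne'
  have hcongr : ∑ i ∈ Finset.Icc (1:ℤ) ((p:ℤ)-1), (i:ℚ) * saw ((b*i:ℚ)/p)
      = ∑ i ∈ Finset.Icc (1:ℤ) ((p:ℤ)-1),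
          ((p:ℚ) * (saw ((i:ℚ)/p) * saw ((b*i:ℚ)/p)) + ((p:ℚ)/2) * saw ((b*i:ℚ)/p)) := by
    apply Finset.sum_congr rfl
    intro i hi
    rw [Finset.mem_Icc] at hi
    have hs := saw_small p hp hi.1 hi.2
    have hi' : (i:ℚ) = (p:ℚ) * saw ((i:ℚ)/p) + (p:ℚ)/2 := by
      rw [hs]; field_simp; ring
    calc (i:ℚ) * saw ((b*i:ℚ)/p)
        = ((p:ℚ) * saw ((i:ℚ)/p) + (p:ℚ)/2) * saw ((b*i:ℚ)/p) := by rw [← hi']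
      _ = _ := by ring
  rw [hcongr, Finset.sum_add_distrib, ← Finset.mul_sum, ← Finset.mul_sum,
    sum_saw_mul_saw p b, sum_saw_c p hp hpb, mul_zero, add_zero]

lemma floor_term (p : ℕ) (hp : p.Prime) {c i : ℤ} (hc : ¬ (p:ℤ) ∣ c)
    (h1 : 1 ≤ i) (h2 : i ≤ (p:ℤ)-1) :
    (⌊(c * i : ℚ)/p⌋ : ℚ) = (c:ℚ)*(i:ℚ)/p - saw ((c*i:ℚ)/p) - 1/2 := by
  have hq0 : (0:ℤ) < (p:ℤ) := by exact_mod_cast hp.pos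
  have hs := saw_eval (p := ((p:ℕ):ℤ)) hq0 (not_dvd_mul p hp hc h1 h2)
  push_cast at hs ⊢
  linarith

theorem stmt7 (p : ℕ) (hp : p.Prime) (a b a' : ℤ)
    (ha0 : 0 < a) (hap : a < p) (hb0 : 0 < b) (hbp : b < p)
    (ha'0 : 0 < a') (ha'p : a' < p) (hinv : a * a' ≡ 1 [ZMOD (p : ℤ)]) :
    ∑ i ∈ Finset.Icc (1 : ℤ) ((p : ℤ) - 1),
        (⌊(a * i : ℚ) / p⌋ : ℚ) * (⌊(b * i : ℚ) / p⌋ : ℚ) =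
      dedekindSum (a' * b) p - (a : ℚ) * dedekindSum b p - (b : ℚ) * dedekindSum a p +
        ((p : ℚ) - 1) / (12 * p) *
          (3 * p - 3 * p * a - 3 * p * b + 2 * a * b * (2 * p - 1)) := by
  have hq2 : 2 ≤ (p:ℤ) := by exact_mod_cast hp.two_le
  have hq0 : (0:ℤ) < (p:ℤ) := by omega
  have hP : (p:ℚ) ≠ 0 := Nat.cast_ne_zero.mpr hp.pos.ne'
  have hpa : ¬ (p:ℤ) ∣ a := fun h => by have := Int.le_of_dvd ha0 h; omega
  have hpb : ¬ (p:ℤ) ∣ b := fun h => by have := Int.le_of_dvd hb0 h; omega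
  have hinv' : (a * a') % (p:ℤ) = 1 % (p:ℤ) := hinv
  have hcongr : ∑ i ∈ Finset.Icc (1:ℤ) ((p:ℤ)-1),
        (⌊(a * i : ℚ)/p⌋ : ℚ) * (⌊(b * i : ℚ)/p⌋ : ℚ)
      = ∑ i ∈ Finset.Icc (1:ℤ) ((p:ℤ)-1),
        (((a:ℚ)*(b:ℚ)/((p:ℚ)*(p:ℚ))) * (i:ℚ)^2
        - ((a:ℚ)/(2*(p:ℚ))) * (i:ℚ) - ((b:ℚ)/(2*(p:ℚ))) * (i:ℚ) + 1/4
        - ((a:ℚ)/(p:ℚ)) * ((i:ℚ) * saw ((b*i:ℚ)/p))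
        - ((b:ℚ)/(p:ℚ)) * ((i:ℚ) * saw ((a*i:ℚ)/p))
        + saw ((a*i:ℚ)/p) * saw ((b*i:ℚ)/p)
        + (1/2) * saw ((a*i:ℚ)/p) + (1/2) * saw ((b*i:ℚ)/p)) := by
    apply Finset.sum_congr rfl
    intro i hi
    rw [Finset.mem_Icc] at hi
    rw [floor_term p hp hpa hi.1 hi.2, floor_term p hp hpb hi.1 hi.2]
    field_simp
    ring
  rw [hcongr]
  simp only [Finset.sum_add_distrib, Finset.sum_sub_distrib, ← Finset.mul_sum]
  rw [sum_sq_Icc p hp.one_lt.le, sum_cast_Icc p hp.one_lt.le, Finset.sum_const,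
    nsmul_eq_mul, card_Icc_cast p hp.one_lt.le, sum_i_saw p hp hpb, sum_i_saw p hp hpa,
    sum_saw_prod p hp a b a' hinv', sum_saw_c p hp hpa, sum_saw_c p hp hpb]
  field_simp
  ring
end

section
/- Let p be prime, 0 < q < p, and let q' be the inverse of q modulo p with 0 < q' < p. If the negative-regular continued fraction of p/q is [e_1,...,e_s], then the negative-regular continued fraction of p/q' is [e_s,...,e_1]. -/
/-- The value of the negative-regular continued fraction
`[e_1,...,e_s] = e_1 - 1/(e_2 - 1/(⋯ - 1/e_s))`. -/
def ncf : List ℤ → ℚ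
  | [] => 0
  | [e] => (e : ℚ)
  | e :: f :: rest => (e : ℚ) - 1 / ncf (f :: rest)

/-- (a, c): first column of product of matrices [[e,-1],[1,0]] -/
def nAC : List ℤ → ℤ × ℤ
  | [] => (1, 0)
  | e :: t => ((nAC t).1 * e - (nAC t).2, (nAC t).1)

/-- (b, d): second column -/
def nBD : List ℤ → ℤ × ℤ
  | [] => (0, 1)
  | e :: t => ((nBD t).1 * e - (nBD t).2, (nBD t).1)

lemma det_lem : ∀ l : List ℤ, (nAC l).1 * (nBD l).2 - (nBD l).1 * (nAC l).2 = 1 := by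
  intro l
  induction l with
  | nil => simp [nAC, nBD]
  | cons e t ih => simp only [nAC, nBD]; nlinarith [ih]

lemma append_lem : ∀ (l : List ℤ) (x : ℤ),
    nAC (l ++ [x]) = ((nAC l).1 * x + (nBD l).1, (nAC l).2 * x + (nBD l).2) ∧
    nBD (l ++ [x]) = (-(nAC l).1, -(nAC l).2) := by
  intro l x
  induction l with
  | nil => simp [nAC, nBD]
  | cons e t ih =>
    obtain ⟨h1, h2⟩ := ih
    simp only [List.cons_append, nAC, nBD, List.append_eq]
    rw [h1, h2]
    constructor <;> · apply Prod.ext <;> simp <;> ring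

lemma reverse_lem : ∀ l : List ℤ,
    nAC l.reverse = ((nAC l).1, -(nBD l).1) ∧ nBD l.reverse = (-(nAC l).2, (nBD l).2) := by
  intro l
  induction l with
  | nil => simp [nAC, nBD]
  | cons e t ih =>
    obtain ⟨h1, h2⟩ := ih
    rw [List.reverse_cons]
    obtain ⟨g1, g2⟩ := append_lem t.reverse e
    rw [g1, g2, h1, h2]
    simp only [nAC, nBD]
    constructor <;> · apply Prod.ext <;> simp <;> ring

lemma key_lem : ∀ l : List ℤ, l ≠ [] → (∀ x ∈ l, 2 ≤ x) →
    0 < (nAC l).2 ∧ (nAC l).2 < (nAC l).1 ∧ 1 < ncf l ∧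
    ncf l = ((nAC l).1 : ℚ) / ((nAC l).2 : ℚ) := by
  intro l
  induction l with
  | nil => intro h; exact absurd rfl h
  | cons e t ih =>
    intro _ h2
    have he : 2 ≤ e := h2 e List.mem_cons_self
    match t with
    | [] =>
      refine ⟨one_pos, ?_, ?_, ?_⟩
      · show (nAC []).1 < (nAC []).1 * e - (nAC []).2; simp [nAC]; omega
      · show 1 < ncf [e]; simp [ncf]; exact_mod_cast lt_of_lt_of_le one_lt_two he
      · show ncf [e] = _; simp [ncf, nAC]
    | f :: r =>
      have ht : f :: r ≠ [] := by simp
      have h2' : ∀ x ∈ f :: r, 2 ≤ x := fun x hx => h2 x (List.mem_cons_of_mem _ hx)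
      obtain ⟨hc, hca, hn1, hval⟩ := ih ht h2'
      set a := (nAC (f :: r)).1 with ha
      set c := (nAC (f :: r)).2 with hcdef
      have ha0 : 0 < a := lt_trans hc hca
      have haq : (0:ℚ) < (a:ℚ) := by exact_mod_cast ha0
      have hn0 : ncf (f :: r) ≠ 0 := by positivity
      have hnew : ncf (e :: f :: r) = (e : ℚ) - 1 / ncf (f :: r) := rfl
      have hACval : nAC (e :: f :: r) = (a * e - c, a) := rfl
      refine ⟨ha0, ?_, ?_, ?_⟩
      · show a < a * e - c; nlinarith
      · rw [hnew]
        have : 1 / ncf (f :: r) < 1 := by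
          rw [div_lt_one (lt_trans one_pos hn1)]; exact hn1
        have : (2:ℚ) ≤ (e:ℚ) := by exact_mod_cast he
        linarith
      · rw [hnew, hACval, hval]
        field_simp
        push_cast; ring

theorem stmt11 (p : ℕ) (hp : p.Prime) (q q' : ℤ)
    (hq0 : 0 < q) (hqp : q < p) (hq'0 : 0 < q') (hq'p : q' < p)
    (hinv : q * q' ≡ 1 [ZMOD (p : ℤ)])
    (e : List ℤ) (hne : e ≠ []) (h2 : ∀ x ∈ e, 2 ≤ x)
    (hval : ncf e = (p : ℚ) / q) :
    ncf e.reverse = (p : ℚ) / q' := by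
  obtain ⟨hc, hca, _, hform⟩ := key_lem e hne h2
  set a := (nAC e).1 with hadef
  set c := (nAC e).2 with hcdef
  set b := (nBD e).1 with hbdef
  set d := (nBD e).2 with hddef
  have hdet : a * d - b * c = 1 := det_lem e
  have hppos : (0:ℤ) < p := by exact_mod_cast hp.pos
  -- a = p and c = q
  have hq' : (q:ℚ) ≠ 0 := by exact_mod_cast hq0.ne'
  have hcq : (c:ℚ) ≠ 0 := by exact_mod_cast hc.ne'
  have hcross : a * q = (p:ℤ) * c := by
    have := hform.symm.trans hval
    rw [div_eq_div_iff hcq hq'] at this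
    exact_mod_cast this
  have hpprime : Prime (p:ℤ) := Nat.prime_iff_prime_int.mp hp
  have hpq : IsCoprime (p:ℤ) q := by
    rw [Prime.coprime_iff_not_dvd hpprime]
    intro hdvd
    have := Int.le_of_dvd hq0 hdvd
    omega
  have hac : IsCoprime a c := ⟨d, -b, by linarith [hdet]⟩
  have hap : a ∣ (p:ℤ) := hac.dvd_of_dvd_mul_right ⟨q, by linarith [hcross]⟩
  have hpa : (p:ℤ) ∣ a := hpq.dvd_of_dvd_mul_right ⟨c, by linarith [hcross]⟩
  have hap' : a = p := Int.dvd_antisymm (by linarith [hc, hca]) hppos.le hap hpa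
  have hcq' : c = q := by
    rw [hap'] at hcross
    exact mul_left_cancel₀ hppos.ne' hcross.symm
  -- reversed list
  have hrev := reverse_lem e
  have hne' : e.reverse ≠ [] := by simpa using hne
  have h2' : ∀ x ∈ e.reverse, 2 ≤ x := fun x hx => h2 x (List.mem_reverse.mp hx)
  obtain ⟨hc2, hca2, _, hform2⟩ := key_lem e.reverse hne' h2'
  rw [hrev.1] at hform2 hc2 hca2
  simp only at hform2 hc2 hca2
  rw [← hbdef] at hc2
  rw [← hadef, ← hbdef] at hform2 hca2
  -- -b = q'
  have hbq' : -b = q' := by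
    have hmod : (p:ℤ) ∣ q * q' - 1 := Int.ModEq.dvd hinv.symm
    have h1 : q * (-b) - 1 = (p:ℤ) * (-d) := by
      rw [← hap', ← hcq']
      linear_combination hdet
    have hd1 : (p:ℤ) ∣ q * (-b) - 1 := ⟨-d, h1⟩
    have hd2 : (p:ℤ) ∣ q * (q' - (-b)) := by
      have heq : q * (q' - (-b)) = (q * q' - 1) - (q * (-b) - 1) := by ring
      rw [heq]; exact dvd_sub hmod hd1
    have hd3 : (p:ℤ) ∣ q' - (-b) := hpq.dvd_of_dvd_mul_left hd2
    have hblt : -b < (p:ℤ) := by rw [← hap']; exact hca2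
    obtain ⟨k, hk⟩ := hd3
    have hk0 : k = 0 := by nlinarith [hc2, hblt, hq'0, hq'p, hppos]
    rw [hk0, mul_zero] at hk
    linarith
  rw [hform2, hap', hbq']; norm_cast
end

section
/- Let p be prime, 0 < q < p, and p/q = [e_1,...,e_s] the negative-regular continued fraction. Let q' be the inverse of q mod p with 0 < q' < p, and let b_{-1}=p, b_0=q, b_{i-2}=b_{i-1}e_i - b_i (0 ≤ b_i < b_{i-1}) be the recursion defining the expansion, with b'_j the analogous sequence for p/q'. Define α_i = -1 + b_{i-1}/p + b'_{s-i}/p for 1 ≤ i ≤ s. Then Σ_{i=1}^{s} α_i·(2 - e_i) = Σ_{i=1}^{s} (e_i - 2) + (q + q')/p - 2(p-1)/p. -/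
private def nrP (e : ℕ → ℤ) : ℕ → ℤ
  | 0 => 0
  | 1 => 1
  | n+2 => e (n+1) * nrP e (n+1) - nrP e n

private def nrQ (e : ℕ → ℤ) : ℕ → ℤ
  | 0 => -1
  | 1 => 0
  | n+2 => e (n+1) * nrQ e (n+1) - nrQ e n

theorem stmt14 (p : ℕ) (hp : p.Prime) (q q' : ℤ)
    (hq0 : 0 < q) (hqp : q < p) (hq'0 : 0 < q') (hq'p : q' < p)
    (hinv : q * q' ≡ 1 [ZMOD (p : ℤ)])
    (s : ℕ) (hs : 1 ≤ s) (e e' : ℕ → ℤ) (b b' : ℕ → ℤ)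
    (he : ∀ i, 1 ≤ i → i ≤ s → 2 ≤ e i)
    (he' : ∀ i, 1 ≤ i → i ≤ s → 2 ≤ e' i)
    (hb0 : b 0 = p) (hb1 : b 1 = q)
    (hbrec : ∀ i, 1 ≤ i → i ≤ s → b (i + 1) = e i * b i - b (i - 1))
    (hbmono : ∀ i, 1 ≤ i → i ≤ s → 0 ≤ b (i + 1) ∧ b (i + 1) < b i)
    (hbend : b (s + 1) = 0)
    (hb'0 : b' 0 = p) (hb'1 : b' 1 = q')
    (hb'rec : ∀ i, 1 ≤ i → i ≤ s → b' (i + 1) = e' i * b' i - b' (i - 1))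
    (hb'mono : ∀ i, 1 ≤ i → i ≤ s → 0 ≤ b' (i + 1) ∧ b' (i + 1) < b' i)
    (hb'end : b' (s + 1) = 0) :
    ∑ i ∈ Finset.Icc 1 s,
        (-1 + (b i : ℚ) / p + (b' (s - i + 1) : ℚ) / p) * (2 - (e i : ℚ)) =
      ∑ i ∈ Finset.Icc 1 s, ((e i : ℚ) - 2) + ((q : ℚ) + q') / p -
        2 * ((p : ℚ) - 1) / p := by
  set P := nrP e with hPdef
  set Q := nrQ e with hQdef
  have hP0 : P 0 = 0 := by simp [hPdef, nrP]
  have hP1 : P 1 = 1 := by simp [hPdef, nrP]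
  have hQ0 : Q 0 = -1 := by simp [hQdef, nrQ]
  have hQ1 : Q 1 = 0 := by simp [hQdef, nrQ]
  have hPrec : ∀ m : ℕ, P (m+2) = e (m+1) * P (m+1) - P m := by
    intro m; simp [hPdef, nrP]
  have hQrec : ∀ m : ℕ, Q (m+2) = e (m+1) * Q (m+1) - Q m := by
    intro m; simp [hQdef, nrQ]
  -- monotonicity / positivity of P
  have key : ∀ i, i ≤ s → 0 ≤ P i ∧ P i < P (i+1) := by
    intro i
    induction i with
    | zero => intro _; rw [hP0, hP1]; omega
    | succ n ih =>
      intro h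
      obtain ⟨h0, h1⟩ := ih (by omega)
      have he2 := he (n+1) (by omega) h
      have hr := hPrec n
      constructor
      · linarith
      · nlinarith [mul_nonneg (by linarith : (0:ℤ) ≤ e (n+1) - 2) (by linarith : (0:ℤ) ≤ P (n+1))]
  -- b in terms of P, Q
  have hbPQ : ∀ i, i ≤ s → b i = q * P i - (p:ℤ) * Q i ∧ b (i+1) = q * P (i+1) - (p:ℤ) * Q (i+1) := by
    intro i
    induction i with
    | zero =>
      intro _
      rw [hb0, hb1, hP0, hP1, hQ0, hQ1]
      constructor <;> ring
    | succ n ih =>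
      intro h
      obtain ⟨h1, h2⟩ := ih (by omega)
      refine ⟨h2, ?_⟩
      have hb := hbrec (n+1) (by omega) h
      simp only [Nat.add_sub_cancel] at hb
      rw [hb, hPrec n, hQrec n]
      linear_combination e (n+1) * h2 - h1
  -- Wronskian
  have hwron : ∀ i, i ≤ s → b i * P (i+1) - b (i+1) * P i = p := by
    intro i
    induction i with
    | zero => intro _; rw [hb0, hb1, hP0, hP1]; ring
    | succ n ih =>
      intro h
      have ih' := ih (by omega)
      have hb := hbrec (n+1) (by omega) h
      simp only [Nat.add_sub_cancel] at hb
      rw [hb, hPrec n]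
      linear_combination ih'
  -- gcd invariance
  have hpprime : Prime ((p:ℤ)) := Nat.prime_iff_prime_int.mp hp
  have hgcd : ∀ i, i ≤ s → IsCoprime (b i) (b (i+1)) := by
    intro i
    induction i with
    | zero =>
      intro _
      rw [hb0, hb1]
      have hnd : ¬ ((p:ℤ) ∣ q) := by
        intro hdvd
        have := Int.le_of_dvd hq0 hdvd
        omega
      exact hpprime.coprime_iff_not_dvd.mpr hnd
    | succ n ih =>
      intro h
      have ih' := ih (by omega)
      have hb := hbrec (n+1) (by omega) h
      simp only [Nat.add_sub_cancel] at hb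
      rw [hb, show e (n+1) * b (n+1) - b n = -b n + b (n+1) * e (n+1) by ring]
      exact (ih'.symm.neg_right).add_mul_left_right _
  have hbspos : 0 < b s := by
    have := hbmono s hs le_rfl
    omega
  have hbs : b s = 1 := by
    have h1 := hgcd s le_rfl
    rw [hbend] at h1
    have := Int.isUnit_iff.mp (isCoprime_zero_right.mp h1)
    omega
  have hPs1 : P (s+1) = p := by
    have := hwron s le_rfl
    rw [hbs, hbend] at this
    linarith
  have hppos : (0:ℤ) < p := by exact_mod_cast hp.pos
  have hPs : P s = q' := by
    have hb_s := (hbPQ s le_rfl).1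
    rw [hbs] at hb_s
    have hdvd1 : (p:ℤ) ∣ q * q' - 1 := (Int.ModEq.dvd hinv.symm)
    have hd : (p:ℤ) ∣ q * (q' - P s) := by
      have : q * (q' - P s) = (q * q' - 1) + (p:ℤ) * (-Q s) := by linear_combination hb_s
      rw [this]
      exact dvd_add hdvd1 (Dvd.intro _ rfl)
    rcases hpprime.dvd_mul.mp hd with hcase | hcase
    · exfalso
      have := Int.le_of_dvd hq0 hcase
      omega
    · obtain ⟨k, hk⟩ := hcase
      have hPsb := key s le_rfl
      have hPs0 : 0 ≤ P s := hPsb.1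
      have hPsp : P s < p := by rw [← hPs1]; exact hPsb.2
      have hk1 : k < 1 := by
        by_contra hc; push_neg at hc; nlinarith
      have hk2 : -1 < k := by
        by_contra hc; push_neg at hc; nlinarith
      have : k = 0 := by omega
      rw [this, mul_zero] at hk
      linarith
  -- reversal: b' j = P (s+1-j)
  have hrev : ∀ j, j ≤ s → b' j = P (s+1-j) ∧ b' (j+1) = P (s-j) := by
    intro j
    induction j with
    | zero =>
      intro _
      simp only [Nat.sub_zero]
      exact ⟨by rw [hb'0, hPs1], by rw [hb'1, hPs]⟩
    | succ n ih =>
      intro h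
      obtain ⟨ih1, ih2⟩ := ih (by omega)
      refine ⟨by rw [show s+1-(n+1) = s - n from by omega]; exact ih2, ?_⟩
      obtain ⟨m, hm⟩ : ∃ m, s - n = m + 1 := ⟨s - n - 1, by omega⟩
      have hb'r := hb'rec (n+1) (by omega) h
      simp only [Nat.add_sub_cancel] at hb'r
      have hmono := hb'mono (n+1) (by omega) h
      have hkey := key m (by omega)
      have e1 : b' n = P (m+2) := by rw [ih1, show s+1-n = m+2 from by omega]
      have e2 : b' (n+1) = P (m+1) := by rw [ih2, hm]
      rw [show s - (n+1) = m from by omega]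
      have hPm : P m = e (m+1) * P (m+1) - P (m+2) := by linarith [hPrec m]
      have hdiff : b' (n+2) - P m = (e' (n+1) - e (m+1)) * P (m+1) := by
        rw [hb'r, hPm, e1, e2]; ring
      have hpos : 0 < P (m+1) := by linarith [hkey.1, hkey.2]
      have hub : b' (n+2) < P (m+1) := by rw [← e2]; exact hmono.2
      have hlb : (0:ℤ) ≤ b' (n+2) := hmono.1
      set k := e' (n+1) - e (m+1) with hkdef
      have h1 : k * P (m+1) < 1 * P (m+1) := by
        rw [one_mul]; linarith [hkey.1]
      have h2 : (-1) * P (m+1) < k * P (m+1) := by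
        have : -P (m+1) < b' (n+2) - P m := by linarith [hkey.2]
        linarith
      have hk1 : k < 1 := lt_of_mul_lt_mul_right h1 hpos.le
      have hk2 : -1 < k := lt_of_mul_lt_mul_right h2 hpos.le
      have hk0 : k = 0 := by omega
      rw [hk0, zero_mul] at hdiff
      linarith
  -- the combined sequence F and telescoping
  set F : ℕ → ℤ := fun i => b i + P i with hFdef
  have hFrec : ∀ i, 1 ≤ i → i ≤ s → F (i+1) = e i * F i - F (i-1) := by
    intro i hi his
    obtain ⟨m, rfl⟩ : ∃ m, i = m + 1 := ⟨i-1, by omega⟩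
    have h1 := hbrec (m+1) hi his
    simp only [Nat.add_sub_cancel] at h1 ⊢
    simp only [hFdef]
    rw [h1, hPrec m]
    ring
  have tele : ∀ t, 1 ≤ t → t ≤ s → ∑ i ∈ Finset.Icc 1 t, (2 * F i - F (i+1) - F (i-1)) = F 1 + F t - F (t+1) - F 0 := by
    intro t ht
    induction t, ht using Nat.le_induction with
    | base =>
      intro _
      rw [Finset.Icc_self, Finset.sum_singleton]
      simp only [Nat.sub_self]
      ring
    | succ t ht ih =>
      intro hts
      rw [Finset.sum_Icc_succ_top (by omega : 1 ≤ t+1), ih (by omega)]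
      simp only [Nat.add_sub_cancel]
      ring
  have hsum : ∑ i ∈ Finset.Icc 1 s, (b i + P i) * (2 - e i) = q + q' - 2*((p:ℤ)-1) := by
    have hcong : ∀ i ∈ Finset.Icc 1 s, (b i + P i) * (2 - e i) = 2 * F i - F (i+1) - F (i-1) := by
      intro i hi
      rw [Finset.mem_Icc] at hi
      have hr := hFrec i hi.1 hi.2
      simp only [hFdef] at hr ⊢
      linarith [hr]
    rw [Finset.sum_congr rfl hcong, tele s hs le_rfl]
    have hF1 : F 1 = q + 1 := by simp only [hFdef]; rw [hb1, hP1]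
    have hFs : F s = 1 + q' := by simp only [hFdef]; rw [hbs, hPs]
    have hFs1 : F (s+1) = p := by simp only [hFdef]; rw [hbend, hPs1]; ring
    have hF0 : F 0 = p := by simp only [hFdef]; rw [hb0, hP0]; ring
    rw [hF1, hFs, hFs1, hF0]; ring
  -- final rational computation
  have hpQ : (p:ℚ) ≠ 0 := by exact_mod_cast hp.pos.ne'
  have step1 : ∀ i ∈ Finset.Icc 1 s,
      (-1 + (b i : ℚ) / p + (b' (s - i + 1) : ℚ) / p) * (2 - (e i : ℚ)) =
      ((e i : ℚ) - 2) + (((b i + P i) * (2 - e i) : ℤ) : ℚ) / p := by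
    intro i hi
    rw [Finset.mem_Icc] at hi
    have hb'i : b' (s - i + 1) = P i := by
      have h := (hrev (s - i + 1) (by omega)).1
      rw [h, show s+1-(s-i+1) = i from by omega]
    rw [hb'i]
    push_cast
    field_simp
    ring
  rw [Finset.sum_congr rfl step1, Finset.sum_add_distrib, ← Finset.sum_div,
    ← Int.cast_sum, hsum]
  push_cast
  ring
end

section
/- Let A be an arrangement of d ≥ 3 lines in the projective plane over an algebraically closed field of positive characteristic, no point lying on all d lines, and let t_n denote the number of points lying on exactly n lines. Then Σ_{n≥2} t_n ≥ d. -/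
open Projectivization

/-- A point `P` of `ℙ²` lies on the line `L` (given by its dual coordinates,
i.e. as a point of the dual projective plane) when the standard pairing of
(fixed) representatives vanishes; this does not depend on the choice of
representatives. -/
def Incident {K : Type*} [Field K]
    (P L : Projectivization K (Fin 3 → K)) : Prop :=
  ∑ i, P.rep i * L.rep i = 0

section Aux

open Matrix

variable {K : Type*} [Field K]

lemma aux_parallel {u x : Fin 3 → K} (h : crossProduct x u = 0) (hu : u ≠ 0) :
    ∃ a : K, a • u = x := by
  have h' : crossProduct u x = 0 := by
    rw [← cross_anticomm, h, neg_zero]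
  have h2 : ¬ LinearIndependent K ![u, x] := by
    rw [← crossProduct_ne_zero_iff_linearIndependent]
    simpa using h'
  rw [LinearIndependent.pair_iff' hu] at h2
  push_neg at h2
  exact h2

lemma aux_cross_cross (x v w : Fin 3 → K) :
    crossProduct x (crossProduct v w) = (x ⬝ᵥ w) • v - (x ⬝ᵥ v) • w := by
  ext i
  fin_cases i <;>
    simp [cross_apply, dotProduct, Fin.sum_univ_three] <;> ring

lemma aux_perp_cross {x v w : Fin 3 → K} (h1 : x ⬝ᵥ v = 0) (h2 : x ⬝ᵥ w = 0) :
    crossProduct x (crossProduct v w) = 0 := by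
  rw [aux_cross_cross, h1, h2, zero_smul, zero_smul, sub_zero]

lemma incident_iff (P L : Projectivization K (Fin 3 → K)) :
    Incident P L ↔ P.rep ⬝ᵥ L.rep = 0 := Iff.rfl

lemma cross_rep_ne_zero {L M : Projectivization K (Fin 3 → K)} (h : L ≠ M) :
    crossProduct L.rep M.rep ≠ 0 := by
  intro hc
  obtain ⟨a, ha⟩ := aux_parallel (by rwa [← cross_anticomm, neg_eq_zero] at hc) M.rep_nonzero
  apply h
  have : Projectivization.mk K L.rep L.rep_nonzero = Projectivization.mk K M.rep M.rep_nonzero := by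
    rw [Projectivization.mk_eq_mk_iff']
    exact ⟨a, ha⟩
  rwa [Projectivization.mk_rep, Projectivization.mk_rep] at this

/-- Any two distinct lines meet. -/
lemma exists_incident {L M : Projectivization K (Fin 3 → K)} (h : L ≠ M) :
    ∃ P, Incident P L ∧ Incident P M := by
  have hu := cross_rep_ne_zero h
  refine ⟨Projectivization.mk K (crossProduct L.rep M.rep) hu, ?_, ?_⟩ <;>
  · rw [incident_iff]
    obtain ⟨a, ha⟩ := Projectivization.exists_smul_eq_mk_rep K (crossProduct L.rep M.rep) hu
    rw [← ha, smul_dotProduct, dotProduct_comm]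
    simp

/-- Two distinct lines meet in a unique point. -/
lemma unique_point {P Q L M : Projectivization K (Fin 3 → K)} (hLM : L ≠ M)
    (h1 : Incident P L) (h2 : Incident P M) (h3 : Incident Q L) (h4 : Incident Q M) :
    P = Q := by
  have hu := cross_rep_ne_zero hLM
  rw [incident_iff] at h1 h2 h3 h4
  obtain ⟨a, ha⟩ := aux_parallel (aux_perp_cross h1 h2) hu
  obtain ⟨b, hb⟩ := aux_parallel (aux_perp_cross h3 h4) hu
  have hb0 : b ≠ 0 := by rintro rfl; exact Q.rep_nonzero (by simpa using hb.symm)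
  have : Projectivization.mk K P.rep P.rep_nonzero = Projectivization.mk K Q.rep Q.rep_nonzero := by
    rw [Projectivization.mk_eq_mk_iff']
    exact ⟨a / b, by rw [← ha, ← hb, smul_smul, div_mul_cancel₀ a hb0]⟩
  rwa [Projectivization.mk_rep, Projectivization.mk_rep] at this

end Aux

/-- For an arrangement of `d ≥ 3` distinct lines in `ℙ²` over an algebraically
closed field of positive characteristic, with no point lying on all `d` lines,
the number of points lying on at least two of the lines (i.e. `Σ_{n≥2} t_n`)
is at least `d`. -/
theorem stmt17 (K : Type*) [Field K] [IsAlgClosed K] (c : ℕ) [CharP K c]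
    (hc : c ≠ 0)
    (A : Finset (Projectivization K (Fin 3 → K))) (d : ℕ)
    (hcard : A.card = d) (hd : 3 ≤ d)
    (hnotall : ∀ P : Projectivization K (Fin 3 → K), ∃ L ∈ A, ¬ Incident P L) :
    d ≤ Set.ncard {P : Projectivization K (Fin 3 → K) |
      2 ≤ Set.ncard {L : Projectivization K (Fin 3 → K) | L ∈ A ∧ Incident P L}} := by
  classical
  set S := {P : Projectivization K (Fin 3 → K) |
      2 ≤ Set.ncard {L : Projectivization K (Fin 3 → K) | L ∈ A ∧ Incident P L}} with hS
  have hmemS : ∀ P, P ∈ S ↔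
      ∃ L ∈ A, ∃ M ∈ A, L ≠ M ∧ Incident P L ∧ Incident P M := by
    intro P
    have hfin : {L : Projectivization K (Fin 3 → K) | L ∈ A ∧ Incident P L}.Finite :=
      A.finite_toSet.subset fun L hL => hL.1
    simp only [hS, Set.mem_setOf_eq]
    rw [show (2 : ℕ) ≤ Set.ncard {L | L ∈ A ∧ Incident P L} ↔
        1 < Set.ncard {L | L ∈ A ∧ Incident P L} from Iff.rfl,
      Set.one_lt_ncard hfin]
    constructor
    · rintro ⟨L, hL, M, hM, hLM⟩
      exact ⟨L, hL.1, M, hM.1, hLM, hL.2, hM.2⟩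
    · rintro ⟨L, hLA, M, hMA, hLM, h1, h2⟩
      exact ⟨L, ⟨hLA, h1⟩, M, ⟨hMA, h2⟩, hLM⟩
  have hSfin : S.Finite := by
    have hsub : S ⊆ ⋃ L ∈ (A : Set _), ⋃ M ∈ (A : Set _),
        {P | L ≠ M ∧ Incident P L ∧ Incident P M} := by
      intro P hP
      obtain ⟨L, hLA, M, hMA, hLM, h1, h2⟩ := (hmemS P).1 hP
      exact Set.mem_biUnion hLA (Set.mem_biUnion hMA ⟨hLM, h1, h2⟩)
    refine Set.Finite.subset (Set.Finite.biUnion A.finite_toSet fun L _ =>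
      Set.Finite.biUnion A.finite_toSet fun M _ => ?_) hsub
    rcases eq_or_ne L M with rfl | h
    · simp
    · exact Set.Subsingleton.finite fun P hP Q hQ =>
        unique_point h hP.2.1 hP.2.2 hQ.2.1 hQ.2.2
  letI : Fintype ↥S := hSfin.fintype
  letI : Membership ↥S ↥A := ⟨fun l p => Incident p.1 l.1⟩
  have hmk : ∀ l₁ l₂ : ↥A, l₁ ≠ l₂ →
      ∃ p : ↥S, Incident p.1 l₁.1 ∧ Incident p.1 l₂.1 := by
    intro l₁ l₂ h
    have hne : (l₁ : Projectivization K (Fin 3 → K)) ≠ ↑l₂ := Subtype.coe_injective.ne h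
    obtain ⟨P, h1, h2⟩ := exists_incident hne
    exact ⟨⟨P, (hmemS P).2 ⟨↑l₁, l₁.2, ↑l₂, l₂.2, hne, h1, h2⟩⟩, h1, h2⟩
  letI : Configuration.HasPoints ↥S ↥A :=
    { exists_point := by
        intro l
        by_contra hcon
        push_neg at hcon
        have hcon' : ∀ p : ↥S, Incident p.1 l.1 := fun p => hcon p
        have hcard2 : 1 < (A.erase ↑l).card := by
          rw [Finset.card_erase_of_mem l.2, hcard]; omega
        obtain ⟨m, hm, n, hn, hmn⟩ := Finset.one_lt_card.mp hcard2
        have hmA := Finset.mem_of_mem_erase hm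
        have hml := Finset.ne_of_mem_erase hm
        have hnA := Finset.mem_of_mem_erase hn
        obtain ⟨p, hp1, hp2⟩ := exists_incident hmn
        have hpS : p ∈ S := (hmemS p).2 ⟨m, hmA, n, hnA, hmn, hp1, hp2⟩
        have hpl : Incident p l.1 := hcon' ⟨p, hpS⟩
        obtain ⟨k, hkA, hk⟩ := hnotall p
        apply hk
        by_cases hk1 : k = ↑l
        · rwa [hk1]
        by_cases hk2 : k = m
        · rwa [hk2]
        obtain ⟨q, hq1, hq2⟩ := exists_incident (show k ≠ m from hk2)
        have hqS : q ∈ S := (hmemS q).2 ⟨k, hkA, m, hmA, hk2, hq1, hq2⟩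
        have hql : Incident q l.1 := hcon' ⟨q, hqS⟩
        have hpq : p = q := unique_point hml hp1 hpl hq2 hql
        rw [hpq]
        exact hq1
      exists_line := by
        intro p
        obtain ⟨L, hLA, hnI⟩ := hnotall p.1
        exact ⟨⟨L, hLA⟩, hnI⟩
      eq_or_eq := by
        intro p₁ p₂ l₁ l₂ h1 h2 h3 h4
        by_cases h : l₁ = l₂
        · exact Or.inr h
        · exact Or.inl (Subtype.ext
            (unique_point (Subtype.coe_injective.ne h) h1 h3 h2 h4))
      mkPoint := fun {l₁ l₂} h => (hmk l₁ l₂ h).choose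
      mkPoint_ax := fun {l₁ l₂} h => (hmk l₁ l₂ h).choose_spec }
  have hle := Configuration.HasPoints.card_le (P := ↥S) (L := ↥A)
  rw [Fintype.card_coe, hcard] at hle
  calc d ≤ Fintype.card ↥S := hle
    _ = S.ncard := by rw [← Nat.card_eq_fintype_card, Nat.card_coe_set_eq]
end
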